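/- Let G be a finite cubic graph and let M and M' be two minimal conflicting subgraphs of G that share no edge. Then M and M' share no vertex. -/

import Mathlib

open SimpleGraph

variable {V : Type*}

/-- Two edges (of a graph) are adjacent if they are distinct and share a vertex. -/
def EdgesAdj (e₁ e₂ : Sym2 V) : Prop := e₁ ≠ e₂ ∧ ∃ v, v ∈ e₁ ∧ v ∈ e₂

/-- `f` is a proper edge colouring of `G`: adjacent edges of `G` get distinct colours. -/
def IsProperEC (G : SimpleGraph V) {α : Type*} (f : Sym2 V → α) : Prop :=
  ∀ e₁ ∈ G.edgeSet, ∀ e₂ ∈ G.edgeSet, EdgesAdj e₁ e₂ → f e₁ ≠ f e₂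

/-- `G` is 3-edge-colourable. -/
def ThreeEC (G : SimpleGraph V) : Prop := ∃ f : Sym2 V → Fin 3, IsProperEC G f

/-- The degree of a vertex. -/
noncomputable def deg (G : SimpleGraph V) (v : V) : ℕ := Nat.card (G.neighborSet v)

/-- Every vertex has degree at most 3. -/
def Subcubic (G : SimpleGraph V) : Prop := ∀ v, deg G v ≤ 3

/-- Every vertex has degree exactly 3. -/
def CubicGraph (G : SimpleGraph V) : Prop := ∀ v, deg G v = 3

/-- The resistance of `G`: the minimum number of edges whose removal from `G`
yields a 3-edge-colourable graph. -/
noncomputable def resistance (G : SimpleGraph V) : ℕ :=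
  sInf {n | ∃ R : Set (Sym2 V), R.ncard = n ∧ ThreeEC (G.deleteEdges R)}

/-- `M` is a minimal conflicting subgraph of `G`: a subgraph of `G` that is not
3-edge-colourable, but `M − e` is 3-edge-colourable for every edge `e` of `M`. -/
def MinConfl (G M : SimpleGraph V) : Prop :=
  M ≤ G ∧ ¬ ThreeEC M ∧ ∀ e ∈ M.edgeSet, ThreeEC (M.deleteEdges {e})

/-- `R` is a representative conflicting subset of `G`: a set of edges of `G`
containing at least one edge from every minimal conflicting subgraph of `G`. -/
def RepConfl (G : SimpleGraph V) (R : Set (Sym2 V)) : Prop :=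
  R ⊆ G.edgeSet ∧ ∀ M : SimpleGraph V, MinConfl G M → (R ∩ M.edgeSet).Nonempty

/-- A minimal colouring of `G`: a proper 4-edge-colouring (colour `0` playing the role
of the fourth colour) in which exactly `resistance G` edges of `G` receive colour `0`. -/
def IsMinimalColoring (G : SimpleGraph V) (f : Sym2 V → Fin 4) : Prop :=
  IsProperEC G f ∧ {e | e ∈ G.edgeSet ∧ f e = 0}.ncard = resistance G

lemma support_deg_ge_two {V : Type*} [Fintype V] (M : SimpleGraph V)
    (hsub : ∀ w, deg M w ≤ 3) (h1 : ¬ ThreeEC M)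
    (h2 : ∀ e ∈ M.edgeSet, ThreeEC (M.deleteEdges {e})) {v : V}
    (hv : v ∈ M.support) : 2 ≤ deg M v := by
  obtain ⟨w, hadj⟩ := hv
  by_contra hlt
  push_neg at hlt
  have hw : w ∈ M.neighborSet v := hadj
  have hcard1 : (M.neighborSet v).ncard ≤ 1 := by
    have h := (Nat.card_coe_set_eq (M.neighborSet v)).symm
    unfold deg at hlt
    omega
  have hNv : M.neighborSet v = {w} := by
    have hge : 1 ≤ (M.neighborSet v).ncard :=
      (Set.ncard_pos (Set.toFinite _)).mpr ⟨w, hw⟩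
    obtain ⟨a, ha⟩ := Set.ncard_eq_one.mp (le_antisymm hcard1 hge)
    rw [ha] at hw ⊢
    rw [Set.mem_singleton_iff.mp hw]
  have hedge : s(v, w) ∈ M.edgeSet := hadj
  obtain ⟨f, hf⟩ := h2 _ hedge
  set S : Set (Fin 3) := (fun x => f s(w, x)) '' (M.neighborSet w \ {v}) with hSdef
  have hScard : S.ncard ≤ 2 := by
    have h1' : S.ncard ≤ (M.neighborSet w \ {v}).ncard :=
      Set.ncard_image_le (Set.toFinite _)
    have hvw : v ∈ M.neighborSet w := hadj.symm
    have h2' : (M.neighborSet w \ {v}).ncard = (M.neighborSet w).ncard - 1 :=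
      Set.ncard_diff_singleton_of_mem hvw
    have h3' : (M.neighborSet w).ncard ≤ 3 := by
      have := hsub w
      unfold deg at this
      rw [Nat.card_coe_set_eq] at this
      exact this
    omega
  have hexc : ∃ c : Fin 3, c ∉ S := by
    by_contra hcall
    push_neg at hcall
    have huniv : S = Set.univ := Set.eq_univ_of_forall hcall
    have : S.ncard = 3 := by
      rw [huniv, Set.ncard_univ, Nat.card_eq_fintype_card, Fintype.card_fin]
    omega
  obtain ⟨c, hc⟩ := hexc
  classical
  apply h1
  refine ⟨fun e => if e = s(v, w) then c else f e, ?_⟩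
  have main : ∀ a b : V, M.Adj a b → s(a, b) ≠ s(v, w) → (a = v ∨ a = w) →
      f s(a, b) ∈ S := by
    intro a b hab hne hav
    rcases hav with rfl | rfl
    · exfalso
      have hb : b ∈ M.neighborSet a := hab
      rw [hNv] at hb
      exact hne (by rw [Set.mem_singleton_iff.mp hb])
    · have hbv : b ≠ v := by
        rintro rfl
        exact hne (Sym2.eq_swap)
      exact ⟨b, ⟨hab, hbv⟩, rfl⟩
  intro e₁
  induction e₁ using Sym2.ind with
  | _ a b =>
  intro he₁ e₂
  induction e₂ using Sym2.ind with
  | _ a' b' =>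
  intro he₂ hadj12
  obtain ⟨hne, u, hu1, hu2⟩ := hadj12
  rw [SimpleGraph.mem_edgeSet] at he₁ he₂
  beta_reduce
  by_cases h₁ : s(a, b) = s(v, w) <;> by_cases h₂ : s(a', b') = s(v, w)
  · exact absurd (h₁.trans h₂.symm) hne
  · rw [if_pos h₁, if_neg h₂]
    have huvw : u = v ∨ u = w := by
      rw [h₁, Sym2.mem_iff] at hu1
      exact hu1
    have hmem : f s(a', b') ∈ S := by
      rw [Sym2.mem_iff] at hu2
      rcases hu2 with rfl | rfl
      · exact main u b' he₂ h₂ huvw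
      · rw [Sym2.eq_swap]
        exact main u a' he₂.symm (by rw [Sym2.eq_swap]; exact h₂) huvw
    exact fun heq => hc (heq ▸ hmem)
  · rw [if_neg h₁, if_pos h₂]
    have huvw : u = v ∨ u = w := by
      rw [h₂, Sym2.mem_iff] at hu2
      exact hu2
    have hmem : f s(a, b) ∈ S := by
      rw [Sym2.mem_iff] at hu1
      rcases hu1 with rfl | rfl
      · exact main u b he₁ h₁ huvw
      · rw [Sym2.eq_swap]
        exact main u a he₁.symm (by rw [Sym2.eq_swap]; exact h₁) huvw
    exact fun heq => hc (heq.symm ▸ hmem)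
  · rw [if_neg h₁, if_neg h₂]
    apply hf
    · rw [SimpleGraph.edgeSet_deleteEdges]
      exact ⟨he₁, h₁⟩
    · rw [SimpleGraph.edgeSet_deleteEdges]
      exact ⟨he₂, h₂⟩
    · exact ⟨hne, u, hu1, hu2⟩

/-- Two edge-disjoint minimal conflicting subgraphs of a finite cubic graph
share no vertex. -/
theorem stmt_5 {V : Type*} [Fintype V] (G M M' : SimpleGraph V)
    (hcubic : CubicGraph G) (hM : MinConfl G M) (hM' : MinConfl G M')
    (hdisj : Disjoint M.edgeSet M'.edgeSet) :
    Disjoint M.support M'.support := by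
  rw [Set.disjoint_left]
  intro v hvM hvM'
  have hdegle : ∀ (H : SimpleGraph V), H ≤ G → ∀ w, deg H w ≤ 3 := by
    intro H hle w
    have hsub : H.neighborSet w ⊆ G.neighborSet w := fun x hx => hle hx
    have := Set.ncard_le_ncard hsub (Set.toFinite _)
    unfold deg
    rw [Nat.card_coe_set_eq]
    calc (H.neighborSet w).ncard ≤ (G.neighborSet w).ncard := this
      _ = 3 := by
        have := hcubic w
        unfold deg at this
        rw [Nat.card_coe_set_eq] at this
        exact this
  have hd1 : 2 ≤ deg M v :=
    support_deg_ge_two M (hdegle M hM.1) hM.2.1 hM.2.2 hvM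
  have hd2 : 2 ≤ deg M' v :=
    support_deg_ge_two M' (hdegle M' hM'.1) hM'.2.1 hM'.2.2 hvM'
  have hdisjN : Disjoint (M.neighborSet v) (M'.neighborSet v) := by
    rw [Set.disjoint_left]
    intro u huM huM'
    exact Set.disjoint_left.mp hdisj ((SimpleGraph.mem_edgeSet M).mpr huM)
      ((SimpleGraph.mem_edgeSet M').mpr huM')
  have hsubU : M.neighborSet v ∪ M'.neighborSet v ⊆ G.neighborSet v := by
    intro x hx
    rcases hx with hx | hx
    · exact hM.1 hx
    · exact hM'.1 hx
  have hkey : deg M v + deg M' v ≤ deg G v := by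
    unfold deg
    rw [Nat.card_coe_set_eq, Nat.card_coe_set_eq, Nat.card_coe_set_eq]
    calc (M.neighborSet v).ncard + (M'.neighborSet v).ncard
        = (M.neighborSet v ∪ M'.neighborSet v).ncard :=
          (Set.ncard_union_eq hdisjN (Set.toFinite _) (Set.toFinite _)).symm
      _ ≤ (G.neighborSet v).ncard := Set.ncard_le_ncard hsubU (Set.toFinite _)
  have := hcubic v
  omega
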